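/- A finite simple graph G is a König-Egerváry graph if and only if there exist maximum independent sets S₁, S₂ of G such that there is a matching from V(G) − (S₁ ∪ S₂) into S₁ ∩ S₂ (equivalently, such a matching exists for every pair of maximum independent sets). -/

import Mathlib

open Set

variable {V : Type*}

/-- `S` is an independent set of `G`. -/
def IndepSet (G : SimpleGraph V) (S : Set V) : Prop :=
  ∀ x ∈ S, ∀ y ∈ S, ¬ G.Adj x y

/-- The independence number `α(G)`. -/
noncomputable def alpha (G : SimpleGraph V) : ℕ :=
  sSup {n | ∃ S : Set V, IndepSet G S ∧ S.ncard = n}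

/-- `S` is a maximum independent set of `G`. -/
def MaxIndep (G : SimpleGraph V) (S : Set V) : Prop :=
  IndepSet G S ∧ S.ncard = alpha G

/-- `Ω(G)`, the family of all maximum independent sets. -/
def Omega (G : SimpleGraph V) : Set (Set V) := {S | MaxIndep G S}

/-- `core(G)`, the intersection of all maximum independent sets. -/
def core (G : SimpleGraph V) : Set V := ⋂₀ Omega G

/-- `corona(G)`, the union of all maximum independent sets. -/
def corona (G : SimpleGraph V) : Set V := ⋃₀ Omega G

/-- The matching number `μ(G)`. -/
noncomputable def matchNum (G : SimpleGraph V) : ℕ :=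
  sSup {n | ∃ M : G.Subgraph, M.IsMatching ∧ M.edgeSet.ncard = n}

/-- A matching from `X` into `Y`: an injection `f` on `X` into `Y` such that each `x ∈ X`
is adjacent to `f x` and the edges `{x, f x}` are pairwise disjoint. -/
def MatchingFrom (G : SimpleGraph V) (X Y : Set V) : Prop :=
  ∃ f : V → V, Set.InjOn f X ∧ (∀ x ∈ X, f x ∈ Y ∧ G.Adj x (f x)) ∧
    ∀ x ∈ X, ∀ y ∈ X, x ≠ y → f x ≠ y

section Aux

variable [Fintype V] {G : SimpleGraph V}

lemma ncard_le_card (S : Set V) : S.ncard ≤ Fintype.card V := by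
  have := Set.ncard_le_ncard (Set.subset_univ S) (Set.toFinite _)
  simpa [Set.ncard_univ] using this

lemma alphaBdd : BddAbove {n | ∃ S : Set V, IndepSet G S ∧ S.ncard = n} :=
  ⟨Fintype.card V, fun n ⟨S, _, hn⟩ => hn ▸ ncard_le_card S⟩

lemma indep_le_alpha {S : Set V} (hS : IndepSet G S) : S.ncard ≤ alpha G :=
  le_csSup alphaBdd ⟨S, hS, rfl⟩

lemma exists_maxIndep (G : SimpleGraph V) : ∃ S, S ∈ Omega G := by
  have h0 : (0 : ℕ) ∈ {n | ∃ S : Set V, IndepSet G S ∧ S.ncard = n} :=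
    ⟨∅, fun x hx => absurd hx (Set.notMem_empty x), by simp⟩
  obtain ⟨S, hS, hn⟩ := Nat.sSup_mem ⟨0, h0⟩ alphaBdd
  exact ⟨S, hS, hn⟩

lemma alpha_le_card : alpha G ≤ Fintype.card V := by
  obtain ⟨S, _, hn⟩ := exists_maxIndep G
  exact hn ▸ ncard_le_card S

lemma matchBdd : BddAbove {n | ∃ M : G.Subgraph, M.IsMatching ∧ M.edgeSet.ncard = n} := by
  classical
  refine ⟨Fintype.card (Sym2 V), fun n ⟨M, _, hn⟩ => ?_⟩
  subst hn
  have := Set.ncard_le_ncard (Set.subset_univ M.edgeSet) (Set.toFinite _)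
  simpa [Set.ncard_univ] using this

lemma matching_le_matchNum {M : G.Subgraph} (hM : M.IsMatching) :
    M.edgeSet.ncard ≤ matchNum G :=
  le_csSup matchBdd ⟨M, hM, rfl⟩

lemma exists_max_matching (G : SimpleGraph V) :
    ∃ M : G.Subgraph, M.IsMatching ∧ M.edgeSet.ncard = matchNum G := by
  have h0 : (0 : ℕ) ∈ {n | ∃ M : G.Subgraph, M.IsMatching ∧ M.edgeSet.ncard = n} := by
    refine ⟨⊥, fun v hv => by simp at hv, ?_⟩
    simp [Set.ncard_eq_zero]
  obtain ⟨M, hM, hn⟩ := Nat.sSup_mem ⟨0, h0⟩ matchBdd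
  exact ⟨M, hM, hn⟩

/-- In a matching, distinct edges are disjoint. -/
lemma matching_edge_unique {M : G.Subgraph} (hM : M.IsMatching)
    {e e' : Sym2 V} (he : e ∈ M.edgeSet) (he' : e' ∈ M.edgeSet) {v : V}
    (hv : v ∈ e) (hv' : v ∈ e') : e = e' := by
  have key : ∀ e ∈ M.edgeSet, ∀ v ∈ e, ∃ u, M.Adj v u ∧ e = s(v, u) := by
    intro e he v hv
    induction e with
    | _ a b =>
      rw [Sym2.mem_iff] at hv
      rcases hv with rfl | rfl
      · exact ⟨b, he, rfl⟩
      · exact ⟨a, M.adj_symm he, Sym2.eq_swap.symm⟩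
  obtain ⟨u, hu, rfl⟩ := key e he v hv
  obtain ⟨u', hu', rfl⟩ := key e' he' v hv'
  rw [(hM (M.edge_vert hu)).unique hu hu']

lemma exists_adj_of_mem_edge {M : G.Subgraph} {e : Sym2 V} (he : e ∈ M.edgeSet)
    {v : V} (hv : v ∈ e) : ∃ u, M.Adj v u ∧ e = s(v, u) := by
  induction e with
  | _ a b =>
    rw [Sym2.mem_iff] at hv
    rcases hv with rfl | rfl
    · exact ⟨b, he, rfl⟩
    · exact ⟨a, M.adj_symm he, Sym2.eq_swap.symm⟩

/-- Choice of an endpoint outside an independent set, for each edge of a matching. -/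
lemma exists_edge_out {M : G.Subgraph} (hM : M.IsMatching) {S : Set V}
    (hS : IndepSet G S) : ∃ f : Sym2 V → V, Set.InjOn f M.edgeSet ∧
      ∀ e ∈ M.edgeSet, f e ∈ e ∧ f e ∉ S := by
  have hex : ∀ e : Sym2 V, ∃ v : V, e ∈ M.edgeSet → (v ∈ e ∧ v ∉ S) := by
    intro e
    by_cases he : e ∈ M.edgeSet
    · induction e with
      | _ a b =>
        have hadj : G.Adj a b := M.adj_sub he
        by_cases ha : a ∈ S
        · by_cases hb : b ∈ S
          · exact absurd hadj (hS a ha b hb)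
          · exact ⟨b, fun _ => ⟨Sym2.mem_mk_right a b, hb⟩⟩
        · exact ⟨a, fun _ => ⟨Sym2.mem_mk_left a b, ha⟩⟩
    · exact ⟨(Quot.out e).1, fun h => absurd h he⟩
  choose f hf using hex
  refine ⟨f, ?_, fun e he => hf e he⟩
  intro e he e' he' hee
  exact matching_edge_unique hM he he' ((hf e he).1) (hee ▸ (hf e' he').1)

/-- α + μ ≤ n always. -/
lemma alpha_add_matchNum_le (G : SimpleGraph V) :
    alpha G + matchNum G ≤ Fintype.card V := by
  obtain ⟨S, hSi, hSc⟩ := exists_maxIndep G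
  obtain ⟨M, hM, hMc⟩ := exists_max_matching G
  obtain ⟨f, hinj, hf⟩ := exists_edge_out hM hSi
  have h1 : M.edgeSet.ncard ≤ (Set.univ \ S).ncard := by
    refine Set.ncard_le_ncard_of_injOn f (fun e he => ?_) hinj (Set.toFinite _)
    exact ⟨trivial, (hf e he).2⟩
  have h2 : (Set.univ \ S).ncard = Fintype.card V - S.ncard := by
    rw [Set.ncard_diff (Set.subset_univ S) (Set.toFinite _)]
    simp [Set.ncard_univ]
  have h3 := _root_.ncard_le_card S
  omega

/-- Forward key lemma: in a KE graph, every vertex outside a maximum independent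
set is matched (by a maximum matching) to a vertex inside it. -/
lemma ke_matched (hKE : alpha G + matchNum G = Fintype.card V)
    {S : Set V} (hS : S ∈ Omega G) {M : G.Subgraph} (hM : M.IsMatching)
    (hMc : M.edgeSet.ncard = matchNum G) {v : V} (hv : v ∉ S) :
    ∃ w, M.Adj v w ∧ w ∈ S := by
  obtain ⟨hSi, hSc⟩ := hS
  obtain ⟨f, hinj, hf⟩ := exists_edge_out hM hSi
  have himg : f '' M.edgeSet = Set.univ \ S := by
    apply Set.eq_of_subset_of_ncard_le
    · rintro _ ⟨e, he, rfl⟩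
      exact ⟨trivial, (hf e he).2⟩
    · rw [Set.ncard_image_of_injOn hinj, hMc,
        Set.ncard_diff (Set.subset_univ S) (Set.toFinite _)]
      simp only [Set.ncard_univ, Nat.card_eq_fintype_card]
      omega
    · exact Set.toFinite _
  have hv' : v ∈ f '' M.edgeSet := himg ▸ ⟨trivial, hv⟩
  obtain ⟨e, he, hfe⟩ := hv'
  obtain ⟨w, hw, rfl⟩ := exists_adj_of_mem_edge he (hfe ▸ (hf e he).1)
  refine ⟨w, hw, ?_⟩
  by_contra hwS
  have hw' : w ∈ f '' M.edgeSet := himg ▸ ⟨trivial, hwS⟩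
  obtain ⟨e', he', hfe'⟩ := hw'
  have : e' = s(v, w) :=
    matching_edge_unique hM he' he (hfe' ▸ (hf e' he').1) (Sym2.mem_mk_right v w)
  subst this
  exact (M.adj_sub hw).ne (hfe.symm.trans hfe')

/-- Build a matching subgraph from an injective adjacency function. -/
lemma matching_of_fun (X : Set V) (f : V → V) (hinj : Set.InjOn f X)
    (hadj : ∀ x ∈ X, G.Adj x (f x)) (hd : ∀ x ∈ X, f x ∉ X) :
    ∃ M : G.Subgraph, M.IsMatching ∧ M.edgeSet.ncard = X.ncard := by
  refine ⟨{
    verts := X ∪ f '' X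
    Adj := fun a b => (a ∈ X ∧ b = f a) ∨ (b ∈ X ∧ a = f b)
    adj_sub := by
      rintro a b (⟨ha, rfl⟩ | ⟨hb, rfl⟩)
      · exact hadj a ha
      · exact (hadj b hb).symm
    edge_vert := by
      rintro a b (⟨ha, rfl⟩ | ⟨hb, rfl⟩)
      · exact Or.inl ha
      · exact Or.inr ⟨b, hb, rfl⟩
    symm := by
      constructor
      rintro a b (⟨ha, rfl⟩ | ⟨hb, rfl⟩)
      · exact Or.inr ⟨ha, rfl⟩
      · exact Or.inl ⟨hb, rfl⟩ }, ?_, ?_⟩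
  · rintro v (hv | ⟨x, hx, rfl⟩)
    · refine ⟨f v, Or.inl ⟨hv, rfl⟩, ?_⟩
      rintro y (⟨_, rfl⟩ | ⟨hy, hv'⟩)
      · rfl
      · exact absurd (hv' ▸ hv) (hd y hy)
    · refine ⟨x, Or.inr ⟨hx, rfl⟩, ?_⟩
      rintro y (⟨hfx, _⟩ | ⟨hy, hv'⟩)
      · exact absurd hfx (hd x hx)
      · exact hinj hy hx hv'.symm
  · have hE : ∀ (e : Sym2 V), e ∈ ({
        verts := X ∪ f '' X
        Adj := fun a b => (a ∈ X ∧ b = f a) ∨ (b ∈ X ∧ a = f b)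
        adj_sub := by
          rintro a b (⟨ha, rfl⟩ | ⟨hb, rfl⟩)
          · exact hadj a ha
          · exact (hadj b hb).symm
        edge_vert := by
          rintro a b (⟨ha, rfl⟩ | ⟨hb, rfl⟩)
          · exact Or.inl ha
          · exact Or.inr ⟨b, hb, rfl⟩
        symm := by
          constructor
          rintro a b (⟨ha, rfl⟩ | ⟨hb, rfl⟩)
          · exact Or.inr ⟨ha, rfl⟩
          · exact Or.inl ⟨hb, rfl⟩ } : G.Subgraph).edgeSet ↔ e ∈ (fun x => s(x, f x)) '' X := by
      intro e
      induction e with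
      | _ a b =>
        rw [SimpleGraph.Subgraph.mem_edgeSet]
        constructor
        · rintro (⟨ha, rfl⟩ | ⟨hb, rfl⟩)
          · exact ⟨a, ha, rfl⟩
          · exact ⟨b, hb, Sym2.eq_swap⟩
        · rintro ⟨x, hx, hxe⟩
          rcases Sym2.eq_iff.mp hxe.symm with ⟨rfl, rfl⟩ | ⟨h1, h2⟩
          · exact Or.inl ⟨hx, rfl⟩
          · subst h1; subst h2; exact Or.inr ⟨hx, rfl⟩
    rw [Set.ext hE, Set.ncard_image_of_injOn]
    intro x hx y hy hxy
    rcases Sym2.eq_iff.mp hxy with ⟨h1, _⟩ | ⟨h1, h2⟩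
    · exact h1
    · exact absurd (h1 ▸ hx) (hd y hy)


/-- Between two maximum independent sets there is always a matching from
`B \ A` into `A \ B` (Hall's theorem argument). -/
lemma matchingFrom_diff {A B : Set V} (hA : A ∈ Omega G) (hB : B ∈ Omega G) :
    MatchingFrom G (B \ A) (A \ B) := by
  classical
  set t : {x // x ∈ B \ A} → Finset V :=
    fun x => Set.toFinset {y | y ∈ A \ B ∧ G.Adj x.1 y} with ht
  have htmem : ∀ (x : {x // x ∈ B \ A}) (y : V), y ∈ t x ↔ y ∈ A \ B ∧ G.Adj x.1 y := by
    intro x y; simp [ht]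
  have hall : ∀ s : Finset {x // x ∈ B \ A}, s.card ≤ (s.biUnion t).card := by
    intro s
    by_contra hcon
    push_neg at hcon
    set N : Set V := ↑(s.biUnion t) with hN
    have hNsub : N ⊆ A \ B := by
      intro y hy
      rw [hN, Finset.coe_biUnion] at hy
      simp only [Set.mem_iUnion] at hy
      obtain ⟨x, -, hx⟩ := hy
      exact ((htmem x y).mp hx).1
    have hssub : Subtype.val '' (↑s : Set {x // x ∈ B \ A}) ⊆ B \ A := by
      rintro _ ⟨x, -, rfl⟩; exact x.2
    set A' : Set V := (A \ N) ∪ (Subtype.val '' (↑s : Set {x // x ∈ B \ A})) with hA'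
    have key : ∀ x ∈ A \ N, ∀ y ∈ Subtype.val '' (↑s : Set {x // x ∈ B \ A}),
        ¬ G.Adj x y := by
      rintro x hx _ ⟨y, hy, rfl⟩ hadj
      have hyBA : (y : V) ∈ B \ A := y.2
      have hxB : x ∉ B := fun hxB => hB.1 x hxB (y : V) hyBA.1 hadj
      have hxt : x ∈ t y := (htmem y x).mpr ⟨⟨hx.1, hxB⟩, hadj.symm⟩
      refine hx.2 ?_
      rw [hN, Finset.coe_biUnion]
      simp only [Set.mem_iUnion]
      exact ⟨y, hy, hxt⟩
    have hindep : IndepSet G A' := by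
      rintro x (hx | hx) y (hy | hy) hadj
      · exact hA.1 x hx.1 y hy.1 hadj
      · exact key x hx y hy hadj
      · exact key y hy x hx hadj.symm
      · exact hB.1 x (hssub hx).1 y (hssub hy).1 hadj
    have hdisj : Disjoint (A \ N) (Subtype.val '' (↑s : Set {x // x ∈ B \ A})) := by
      rw [Set.disjoint_left]
      intro a ha hb
      exact (hssub hb).2 ha.1
    have hcard : A'.ncard = (A \ N).ncard +
        (Subtype.val '' (↑s : Set {x // x ∈ B \ A})).ncard :=
      Set.ncard_union_eq hdisj (Set.toFinite _) (Set.toFinite _)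
    have h1 : (A \ N).ncard = A.ncard - N.ncard :=
      Set.ncard_diff (hNsub.trans Set.diff_subset) (Set.toFinite _)
    have h2 : (Subtype.val '' (↑s : Set {x // x ∈ B \ A})).ncard = s.card := by
      rw [Set.ncard_image_of_injective _ Subtype.val_injective, Set.ncard_coe_finset]
    have h3 : N.ncard = (s.biUnion t).card := by rw [hN, Set.ncard_coe_finset]
    have h4 : N.ncard ≤ A.ncard := Set.ncard_le_ncard (hNsub.trans Set.diff_subset)
      (Set.toFinite _)
    have h5 : A'.ncard ≤ alpha G := indep_le_alpha hindep
    have h6 : A.ncard = alpha G := hA.2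
    omega
  obtain ⟨f, hfinj, hfmem⟩ := (Finset.all_card_le_biUnion_card_iff_exists_injective t).mp hall
  refine ⟨fun v => if h : v ∈ B \ A then f ⟨v, h⟩ else v, ?_, ?_, ?_⟩
  · intro x hx y hy hxy
    simp only [dif_pos hx, dif_pos hy] at hxy
    exact Subtype.mk_eq_mk.mp (hfinj hxy)
  · intro x hx
    simp only [dif_pos hx]
    have h := (htmem ⟨x, hx⟩ _).mp (hfmem ⟨x, hx⟩)
    exact ⟨h.1, h.2⟩
  · intro x hx y hy _ heq
    simp only [dif_pos hx] at heq
    have h := ((htmem ⟨x, hx⟩ _).mp (hfmem ⟨x, hx⟩)).1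
    rw [heq] at h
    exact h.2 hy.1

/-- The backward direction: a single good pair of maximum independent sets
forces the König–Egerváry property. -/
lemma ke_of_pair {S₁ S₂ : Set V} (h₁ : S₁ ∈ Omega G) (h₂ : S₂ ∈ Omega G)
    (hm : MatchingFrom G (Set.univ \ (S₁ ∪ S₂)) (S₁ ∩ S₂)) :
    alpha G + matchNum G = Fintype.card V := by
  classical
  obtain ⟨f, hfinj, hfmem, -⟩ := hm
  obtain ⟨g, hginj, hgmem, -⟩ := matchingFrom_diff h₁ h₂
  set D : Set V := Set.univ \ (S₁ ∪ S₂) with hD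
  set X : Set V := Set.univ \ S₁ with hX
  set F : V → V := fun v => if v ∈ D then f v else g v with hF
  have hsplit : ∀ x ∈ X, x ∈ D ∨ x ∈ S₂ \ S₁ := by
    intro x hx
    by_cases hxD : x ∈ D
    · exact Or.inl hxD
    · right
      refine ⟨?_, hx.2⟩
      rcases not_not.mp (fun h => hxD ⟨trivial, h⟩) with h | h
      · exact absurd h hx.2
      · exact h
  have hFval : ∀ x ∈ X, (x ∈ D ∧ F x = f x ∧ F x ∈ S₁ ∩ S₂) ∨
      (x ∈ S₂ \ S₁ ∧ F x = g x ∧ F x ∈ S₁ \ S₂) := by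
    intro x hx
    rcases hsplit x hx with h | h
    · exact Or.inl ⟨h, if_pos h, by rw [hF]; simp only [if_pos h]; exact (hfmem x h).1⟩
    · have hxD : x ∉ D := fun hc => hc.2 (Or.inr h.1)
      exact Or.inr ⟨h, if_neg hxD, by rw [hF]; simp only [if_neg hxD]; exact (hgmem x h).1⟩
  have hFS₁ : ∀ x ∈ X, F x ∈ S₁ := by
    intro x hx
    rcases hFval x hx with ⟨-, -, h⟩ | ⟨-, -, h⟩
    · exact h.1
    · exact h.1
  have hadj : ∀ x ∈ X, G.Adj x (F x) := by
    intro x hx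
    rcases hFval x hx with ⟨h, he, -⟩ | ⟨h, he, -⟩
    · rw [he]; exact (hfmem x h).2
    · rw [he]; exact (hgmem x h).2
  have hd : ∀ x ∈ X, F x ∉ X := fun x hx hc => hc.2 (hFS₁ x hx)
  have hinj : Set.InjOn F X := by
    intro x hx y hy hxy
    rcases hFval x hx with ⟨hx1, hx2, hx3⟩ | ⟨hx1, hx2, hx3⟩ <;>
      rcases hFval y hy with ⟨hy1, hy2, hy3⟩ | ⟨hy1, hy2, hy3⟩
    · exact hfinj hx1 hy1 (by rw [← hx2, ← hy2, hxy])
    · exact absurd (hxy ▸ hx3).2 hy3.2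
    · exact absurd (hxy.symm ▸ hy3).2 hx3.2
    · exact hginj hx1 hy1 (by rw [← hx2, ← hy2, hxy])
  obtain ⟨M, hM, hMc⟩ := matching_of_fun X F hinj hadj hd
  have h1 : X.ncard = Fintype.card V - alpha G := by
    rw [hX, Set.ncard_diff (Set.subset_univ S₁) (Set.toFinite _), h₁.2]
    simp [Set.ncard_univ]
  have h2 : Fintype.card V - alpha G ≤ matchNum G := by
    rw [← h1, ← hMc]
    exact matching_le_matchNum hM
  have h3 := alpha_add_matchNum_le G
  have h4 : alpha G ≤ Fintype.card V := alpha_le_card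
  omega

/-- The forward direction. -/
lemma ke_forall (hKE : alpha G + matchNum G = Fintype.card V)
    {S₁ S₂ : Set V} (h₁ : S₁ ∈ Omega G) (h₂ : S₂ ∈ Omega G) :
    MatchingFrom G (Set.univ \ (S₁ ∪ S₂)) (S₁ ∩ S₂) := by
  obtain ⟨M, hM, hMc⟩ := exists_max_matching G
  have hex : ∀ v : V, ∃ w, v ∈ Set.univ \ (S₁ ∪ S₂) → (M.Adj v w ∧ w ∈ S₁ ∩ S₂) := by
    intro v
    by_cases hv : v ∈ Set.univ \ (S₁ ∪ S₂)
    · obtain ⟨w, hw, hwS₁⟩ := ke_matched hKE h₁ hM hMc (fun h => hv.2 (Or.inl h))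
      obtain ⟨w', hw', hwS₂⟩ := ke_matched hKE h₂ hM hMc (fun h => hv.2 (Or.inr h))
      have heq : w = w' := (hM (M.edge_vert hw)).unique hw hw'
      exact ⟨w, fun _ => ⟨hw, hwS₁, heq ▸ hwS₂⟩⟩
    · exact ⟨v, fun h => absurd h hv⟩
  choose F hF using hex
  refine ⟨F, ?_, fun x hx => ⟨(hF x hx).2, M.adj_sub (hF x hx).1⟩, ?_⟩
  · intro x hx y hy hxy
    have h1 := M.adj_symm (hF x hx).1
    have h2 := M.adj_symm (hF y hy).1
    rw [hxy] at h1
    exact (hM (M.edge_vert h1)).unique h1 h2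
  · intro x hx y hy _ heq
    have h := (hF x hx).2
    rw [heq] at h
    exact hy.2 (Or.inl h.1)

end Aux

theorem stmt_19 [Fintype V] (G : SimpleGraph V) :
    (alpha G + matchNum G = Fintype.card V ↔
      ∀ S₁ ∈ Omega G, ∀ S₂ ∈ Omega G,
        MatchingFrom G (Set.univ \ (S₁ ∪ S₂)) (S₁ ∩ S₂)) ∧
    (alpha G + matchNum G = Fintype.card V ↔
      ∃ S₁ ∈ Omega G, ∃ S₂ ∈ Omega G,
        MatchingFrom G (Set.univ \ (S₁ ∪ S₂)) (S₁ ∩ S₂)) := by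
  obtain ⟨S, hS⟩ := exists_maxIndep G
  constructor
  · exact ⟨fun h S₁ h₁ S₂ h₂ => ke_forall h h₁ h₂,
      fun h => ke_of_pair hS hS (h S hS S hS)⟩
  · exact ⟨fun h => ⟨S, hS, S, hS, ke_forall h hS hS⟩,
      fun ⟨S₁, h₁, S₂, h₂, hm⟩ => ke_of_pair h₁ h₂ hm⟩
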